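/- The (i,j) entry of the product of whirls M(x_1)M(x_2)⋯M(x_m) equals the loop elementary symmetric function e_{j-i}^{(i)}, which has the explicit formula e_k^{(r)}(x_1,...,x_m) = Σ x_{i_1}^{(r)} x_{i_2}^{(r+1)} ⋯ x_{i_k}^{(r+k-1)}, the sum over strictly increasing sequences 1 ≤ i_1 < i_2 < ⋯ < i_k ≤ m. -/

import Mathlib

open Finset

/-- Multiplication of (upper-triangular) N-by-N matrices: for upper triangular
matrices this agrees with true matrix multiplication. -/
def utMul {K : Type*} [Field K] (A B : Matrix ℕ ℕ K) : Matrix ℕ ℕ K :=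
  Matrix.of fun i j => ∑ t ∈ Finset.Icc i j, A i t * B t j

/-- The identity infinite matrix. -/
def oneM {K : Type*} [Field K] : Matrix ℕ ℕ K := Matrix.of fun i j => if i = j then 1 else 0

/-- Checkerboard conjugate `A^c` of an infinite matrix. -/
def chkInf {K : Type*} [Field K] (A : Matrix ℕ ℕ K) : Matrix ℕ ℕ K :=
  Matrix.of fun i j => (-1 : K) ^ (i + j) * A i j

/-- The whirl `M(a_1, …, a_n)`: upper bitriangular with 1's on the diagonal and
`a_i` (index mod `n`) on the superdiagonal. -/
def whirl {K : Type*} [Field K] (n : ℕ) (a : ZMod n → K) : Matrix ℕ ℕ K :=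
  Matrix.of fun i j => if j = i then 1 else if j = i + 1 then a (i : ZMod n) else 0

/-- `κ^{(r)}(x,y) = Σ_{j=0}^{n-1} y^{(r+1)}⋯y^{(r+j)} x^{(r+j+1)}⋯x^{(r+n-1)}`. -/
def kappa {K : Type*} [Field K] (n : ℕ) (xx yy : ZMod n → K) (r : ZMod n) : K :=
  ∑ j ∈ Finset.range n,
    (∏ t ∈ Finset.Icc 1 j, yy (r + (t : ZMod n))) *
      ∏ t ∈ Finset.Icc (j + 1) (n - 1), xx (r + (t : ZMod n))

/-- Loop elementary symmetric function
`e_k^{(r)} = Σ_{i_1 < ⋯ < i_k} x_{i_1}^{(r)} x_{i_2}^{(r+1)} ⋯ x_{i_k}^{(r+k-1)}`. -/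
def loopE {K : Type*} [Field K] (m n : ℕ) (x : Fin m → ZMod n → K) (k : ℕ) (r : ZMod n) : K :=
  ∑ f ∈ Finset.univ.filter (fun f : Fin k → Fin m => ∀ a b : Fin k, a < b → f a < f b),
    ∏ t : Fin k, x (f t) (r + ((t : ℕ) : ZMod n))

/-- Loop homogeneous symmetric function
`h_k^{(r)} = Σ_{i_k ≥ ⋯ ≥ i_1} x_{i_k}^{(r)} x_{i_{k-1}}^{(r+1)} ⋯ x_{i_1}^{(r+k-1)}`,
encoded via the weakly increasing sequence `f = (i_1, …, i_k)`. -/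
def loopH {K : Type*} [Field K] (m n : ℕ) (x : Fin m → ZMod n → K) (k : ℕ) (r : ZMod n) : K :=
  ∑ f ∈ Finset.univ.filter (fun f : Fin k → Fin m => ∀ a b : Fin k, a ≤ b → f a ≤ f b),
    ∏ t : Fin k, x (f t) (r + ((k - 1 - (t : ℕ) : ℕ) : ZMod n))

/-- Loop homogeneous symmetric function with integer index, `0` for negative index. -/
noncomputable def loopHZ {K : Type*} [Field K] (m n : ℕ) (x : Fin m → ZMod n → K)
    (k : ℤ) (r : ZMod n) : K :=
  if k < 0 then 0 else loopH m n x k.toNat r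

/-- Single-block loop homogeneous function `h_a^{(b)}(y) = y^{(b+a-1)} y^{(b+a-2)} ⋯ y^{(b)}`. -/
def singleH {K : Type*} [Field K] (n : ℕ) (y : ZMod n → K) (a : ℕ) (b : ZMod n) : K :=
  ∏ s ∈ Finset.range a, y (b + (s : ZMod n))

/-- `π = y^{(1)} y^{(2)} ⋯ y^{(n)}`, the product over all colors of one block. -/
def pivar {K : Type*} [Field K] (n : ℕ) [NeZero n] (y : ZMod n → K) : K := ∏ j : ZMod n, y j

/-- The product of whirls `M(x_1) M(x_2) ⋯ M(x_m)`. -/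
noncomputable def whirlProd {K : Type*} [Field K] (m n : ℕ) (x : Fin m → ZMod n → K) :
    Matrix ℕ ℕ K :=
  (List.ofFn fun i : Fin m => whirl n (x i)).foldr utMul oneM

lemma loopE_zero {K : Type*} [Field K] (m n : ℕ) (x : Fin m → ZMod n → K) (r : ZMod n) :
    loopE m n x 0 r = 1 := by
  unfold loopE
  have h1 : (Finset.univ.filter (fun f : Fin 0 → Fin m => ∀ a b : Fin 0, a < b → f a < f b))
      = Finset.univ := by
    apply Finset.filter_true_of_mem; intro f _ a; exact a.elim0
  rw [h1]
  simp

lemma loopE_m_zero {K : Type*} [Field K] (n k : ℕ) (x : Fin 0 → ZMod n → K) (r : ZMod n)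
    (hk : 0 < k) : loopE 0 n x k r = 0 := by
  unfold loopE
  have : IsEmpty (Fin k → Fin 0) := by
    haveI : Nonempty (Fin k) := ⟨⟨0, hk⟩⟩
    infer_instance
  rw [Finset.univ_eq_empty, Finset.filter_empty, Finset.sum_empty]

lemma loopE_succ {K : Type*} [Field K] (m n k : ℕ) (x : Fin (m+1) → ZMod n → K) (r : ZMod n) :
    loopE (m+1) n x (k+1) r =
      loopE m n (fun i => x i.succ) (k+1) r + x 0 r * loopE m n (fun i => x i.succ) k (r+1) := by
  classical
  unfold loopE
  set S := Finset.univ.filter (fun f : Fin (k+1) → Fin (m+1) => ∀ a b : Fin (k+1), a < b → f a < f b) with hS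
  rw [← Finset.sum_filter_add_sum_filter_not S (fun f => f 0 = 0), add_comm]
  congr 1
  · -- f 0 ≠ 0 case ↦ first term
    refine Finset.sum_bij'
      (i := fun f hf => fun t : Fin (k+1) => (f t).pred (by
        simp only [S, Finset.mem_filter] at hf
        obtain ⟨⟨_, hincr⟩, h0⟩ := hf
        intro h
        rcases eq_or_lt_of_le (Fin.zero_le t) with ht | ht
        · exact h0 (by rw [← ht] at h; exact h)
        · exact absurd ((hincr 0 t ht).trans_eq h) (Fin.not_lt_zero _)))
      (j := fun g _ => fun t => (g t).succ) ?_ ?_ ?_ ?_ ?_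
    · intro f hf
      simp only [S, Finset.mem_filter] at hf ⊢
      obtain ⟨⟨_, hincr⟩, h0⟩ := hf
      exact ⟨Finset.mem_univ _, fun a b hab => Fin.pred_lt_pred_iff.mpr (hincr a b hab)⟩
    · intro g hg
      simp only [S, Finset.mem_filter] at hg ⊢
      obtain ⟨_, hincr⟩ := hg
      exact ⟨⟨Finset.mem_univ _, fun a b hab => Fin.succ_lt_succ_iff.mpr (hincr a b hab)⟩,
        (Fin.succ_ne_zero _)⟩
    · intro f hf; funext t; simp
    · intro g hg; funext t; simp
    · intro f hf
      apply Finset.prod_congr rfl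
      intro t _
      congr 1
      simp
  · -- f 0 = 0 case ↦ second term
    rw [Finset.mul_sum]
    refine Finset.sum_bij'
      (i := fun f hf => fun t : Fin k => (f t.succ).pred (by
        simp only [S, Finset.mem_filter] at hf
        obtain ⟨⟨_, hincr⟩, h0⟩ := hf
        have := hincr 0 t.succ (Fin.succ_pos t)
        rw [h0] at this
        exact Fin.pos_iff_ne_zero.mp this))
      (j := fun g _ => Fin.cases 0 (fun t => (g t).succ)) ?_ ?_ ?_ ?_ ?_
    · intro f hf
      simp only [S, Finset.mem_filter] at hf ⊢
      obtain ⟨⟨_, hincr⟩, h0⟩ := hf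
      refine ⟨Finset.mem_univ _, fun a b hab => ?_⟩
      exact Fin.pred_lt_pred_iff.mpr (hincr a.succ b.succ (Fin.succ_lt_succ_iff.mpr hab))
    · intro g hg
      simp only [S, Finset.mem_filter] at hg ⊢
      obtain ⟨_, hincr⟩ := hg
      refine ⟨⟨Finset.mem_univ _, fun a b hab => ?_⟩, rfl⟩
      induction b using Fin.cases with
      | zero => exact absurd hab (Fin.not_lt_zero a)
      | succ b' =>
        induction a using Fin.cases with
        | zero => simp [Fin.succ_pos]
        | succ a' =>
          simp only [Fin.cases_succ]
          exact Fin.succ_lt_succ_iff.mpr (hincr a' b' (Fin.succ_lt_succ_iff.mp hab))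
    · intro f hf
      funext t
      induction t using Fin.cases with
      | zero =>
        simp only [S, Finset.mem_filter] at hf
        simp [hf.2]
      | succ t' => simp
    · intro g hg
      funext t
      simp
    · intro f hf
      simp only [S, Finset.mem_filter] at hf
      obtain ⟨⟨_, hincr⟩, h0⟩ := hf
      rw [Fin.prod_univ_succ]; simp only [h0]
      congr 1
      · norm_num
      · apply Finset.prod_congr rfl
        intro t _
        congr 1
        · simp
        · rw [Fin.val_succ]
          push_cast
          ring

lemma whirlProd_zero {K : Type*} [Field K] (n : ℕ) (x : Fin 0 → ZMod n → K) :
    whirlProd 0 n x = oneM := by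
  simp [whirlProd]

lemma whirlProd_succ {K : Type*} [Field K] (m n : ℕ) (x : Fin (m+1) → ZMod n → K) :
    whirlProd (m+1) n x = utMul (whirl n (x 0)) (whirlProd m n (fun i => x i.succ)) := by
  simp [whirlProd, List.ofFn_succ]

lemma utMul_whirl_entry {K : Type*} [Field K] (n : ℕ) (a : ZMod n → K) (B : Matrix ℕ ℕ K)
    (i j : ℕ) (hij : i ≤ j) :
    utMul (whirl n a) B i j =
      B i j + if i + 1 ≤ j then a (i : ZMod n) * B (i+1) j else 0 := by
  unfold utMul whirl
  simp only [Matrix.of_apply]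
  rcases Nat.lt_or_ge j (i+1) with h | h
  · have hji : j = i := by omega
    subst hji
    simp
  · have hsub : Finset.Icc i (i+1) ⊆ Finset.Icc i j := by
      intro t ht
      simp only [Finset.mem_Icc] at ht ⊢
      omega
    rw [← Finset.sum_subset hsub]
    · rw [show Finset.Icc i (i+1) = {i, i+1} from by ext t; simp [Finset.mem_Icc]; omega]
      rw [Finset.sum_pair (by omega)]
      simp [h, show i + 1 ≠ i by omega, show i ≠ i + 1 from by omega]
    · intro t ht htn
      simp only [Finset.mem_Icc] at ht htn
      simp [show ¬ (t = i) by omega, show ¬ (t = i + 1) by omega]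

lemma whirlProd_entry {K : Type*} [Field K] (n : ℕ) :
    ∀ (m : ℕ) (x : Fin m → ZMod n → K) (i j : ℕ), i ≤ j →
      whirlProd m n x i j = loopE m n x (j - i) ((i : ℕ) : ZMod n) := by
  intro m
  induction m with
  | zero =>
    intro x i j hij
    rw [whirlProd_zero]
    rcases eq_or_lt_of_le hij with h | h
    · subst h
      simp [oneM, loopE_zero]
    · rw [loopE_m_zero _ _ _ _ (by omega)]
      simp [oneM, show i ≠ j by omega]
  | succ m ih =>
    intro x i j hij
    rw [whirlProd_succ, utMul_whirl_entry _ _ _ _ _ hij]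
    rcases eq_or_lt_of_le hij with h | h
    · subst h
      rw [if_neg (by omega), ih _ i i le_rfl]
      simp [loopE_zero]
    · rw [if_pos (by omega), ih _ i j hij, ih _ (i+1) j (by omega)]
      have hk : j - i = (j - (i+1)) + 1 := by omega
      rw [hk, loopE_succ]
      congr 2
      push_cast
      ring

/-- The `(i,j)` entry of `M(x_1)⋯M(x_m)` is the loop elementary symmetric function
`e_{j-i}^{(i)} = Σ_{i_1 < ⋯ < i_k} x_{i_1}^{(r)} ⋯ x_{i_k}^{(r+k-1)}` with `k = j-i`, `r = i`. -/
theorem statement3 {K : Type*} [Field K] (m n : ℕ) [NeZero n] (x : Fin m → ZMod n → K) :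
    ∀ i j : ℕ, i ≤ j → whirlProd m n x i j = loopE m n x (j - i) ((i : ℕ) : ZMod n) := by
  intro i j hij
  exact whirlProd_entry n m x i j hij
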